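/- Let X and Y be point-complete (sober) T₀-spaces. If Ψ : O(X) → O(Y) is an order isomorphism (a bijection such that U₁ ⊆ U₂ if and only if Ψ(U₁) ⊆ Ψ(U₂)), then there exists a unique homeomorphism π from Y onto X such that Ψ(U) = π⁻¹(U) for every open U ⊆ X. -/

import Mathlib

open TopologicalSpace

/-- Given an order isomorphism of open-set lattices into a sober space's lattice, every point
of the target comes from a unique point of the sober space, in the sense of membership in all
opens. -/
lemma stmt4_aux {X Y : Type*} [TopologicalSpace X] [TopologicalSpace Y]
    [QuasiSober X] (e : Opens X ≃o Opens Y) (y : Y) :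
    ∃ x : X, ∀ U : Opens X, x ∈ U ↔ y ∈ e U := by
  set V : Opens Y := ⟨(closure {y})ᶜ, isClosed_closure.isOpen_compl⟩ with hV
  set W : Opens X := e.symm V with hW
  have heW : e W = V := e.apply_symm_apply V
  have hgy : IsGenericPoint y (closure {y}) := isGenericPoint_closure
  have key : ∀ U : Opens X, ¬ U ≤ W ↔ y ∈ e U := by
    intro U
    rw [← e.le_iff_le, heW]
    have : e U ≤ V ↔ Disjoint (closure ({y} : Set Y)) (e U : Set Y) := by
      constructor
      · intro h
        exact Set.disjoint_left.mpr fun z hz hz' => (h hz') hz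
      · intro h z hz
        exact fun hz' => Set.disjoint_left.mp h hz' hz
    rw [this, hgy.disjoint_iff (e U).isOpen, not_not]
    exact Iff.rfl
  -- the closed set whose generic point we take
  set C : Set X := (W : Set X)ᶜ with hC
  have hCclosed : IsClosed C := W.isOpen.isClosed_compl
  have hmem : ∀ U : Opens X, (C ∩ U).Nonempty ↔ y ∈ e U := by
    intro U
    rw [← key U]
    constructor
    · rintro ⟨x, hxC, hxU⟩ hle
      exact hxC (hle hxU)
    · intro h
      by_contra hne
      refine h fun x hxU => ?_
      by_contra hxW
      exact hne ⟨x, hxW, hxU⟩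
  have hCirr : IsIrreducible C := by
    constructor
    · have : y ∈ e ⊤ := by
        rw [← key ⊤]
        intro h
        have : W = ⊤ := le_antisymm le_top h
        have : (W : Set X) = Set.univ := by rw [this]; rfl
        have hVtop : (V : Set Y) = Set.univ := by
          have := congrArg (fun (O : Opens X) => ((e O : Opens Y) : Set Y))
            (le_antisymm le_top h)
          rw [heW] at this
          have he_top : e ⊤ = ⊤ := e.map_top
          rw [this, he_top]; rfl
        have : y ∈ (closure ({y} : Set Y))ᶜ := by
          rw [hV] at hVtop
          simp only [Opens.coe_mk] at hVtop
          rw [hVtop]; trivial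
        exact this (subset_closure rfl)
      rcases (hmem ⊤).mpr this with ⟨x, hx, -⟩
      exact ⟨x, hx⟩
    · intro u v hu hv ⟨xu, hxuC, hxuU⟩ ⟨xv, hxvC, hxvV⟩
      have h1 : y ∈ e ⟨u, hu⟩ := (hmem ⟨u, hu⟩).mp ⟨xu, hxuC, hxuU⟩
      have h2 : y ∈ e ⟨v, hv⟩ := (hmem ⟨v, hv⟩).mp ⟨xv, hxvC, hxvV⟩
      have h3 : y ∈ e (⟨u, hu⟩ ⊓ ⟨v, hv⟩) := by
        rw [e.map_inf]
        exact ⟨h1, h2⟩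
      exact (hmem (⟨u, hu⟩ ⊓ ⟨v, hv⟩)).mpr h3
  obtain ⟨x, hx⟩ := QuasiSober.sober hCirr hCclosed
  refine ⟨x, fun U => ?_⟩
  show x ∈ (U : Set X) ↔ _
  rw [hx.mem_open_set_iff U.isOpen, hmem U]

/-- In a T0 space, membership in all opens determines a point, so the characterizing property
pins down the point uniquely. -/
lemma stmt4_ext {X : Type*} [TopologicalSpace X] [T0Space X] {x x' : X}
    (h : ∀ U : Opens X, x ∈ U ↔ x' ∈ U) : x = x' := by
  have : Inseparable x x' := by
    rw [inseparable_iff_forall_isOpen]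
    intro s hs
    exact h ⟨s, hs⟩
  exact this.eq

/-- If `X` and `Y` are point-complete (sober) T₀-spaces and `Ψ : O(X) → O(Y)` is an order
isomorphism, then there is a unique homeomorphism `π : Y → X` with `Ψ(U) = π⁻¹(U)` for all
open `U ⊆ X`. -/
theorem stmt4 {X Y : Type*} [TopologicalSpace X] [TopologicalSpace Y]
    [T0Space X] [QuasiSober X] [T0Space Y] [QuasiSober Y]
    (Ψ : Opens X → Opens Y) (hbij : Function.Bijective Ψ)
    (hord : ∀ U₁ U₂ : Opens X, U₁ ≤ U₂ ↔ Ψ U₁ ≤ Ψ U₂) :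
    ∃! π : Y ≃ₜ X, ∀ U : Opens X, (Ψ U : Set Y) = ⇑π ⁻¹' (U : Set X) := by
  classical
  let e : Opens X ≃o Opens Y :=
    { toEquiv := Equiv.ofBijective Ψ hbij
      map_rel_iff' := fun {a b} => (hord a b).symm }
  have heΨ : ∀ U : Opens X, e U = Ψ U := fun _ => rfl
  choose f hf using fun y => stmt4_aux e y
  choose g hg using fun x => stmt4_aux e.symm x
  -- key properties
  have hgf : ∀ y, g (f y) = y := by
    intro y
    refine stmt4_ext (fun V => ?_)
    rw [hg (f y) V]
    have := hf y (e.symm V)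
    rw [e.apply_symm_apply] at this
    exact this
  have hfg : ∀ x, f (g x) = x := by
    intro x
    refine stmt4_ext (fun U => ?_)
    rw [hf (g x) U]
    have := hg x (e U)
    rw [e.symm_apply_apply] at this
    exact this
  have hfpre : ∀ U : Opens X, f ⁻¹' (U : Set X) = (e U : Set Y) := by
    intro U
    ext y
    exact hf y U
  have hgpre : ∀ V : Opens Y, g ⁻¹' (V : Set Y) = (e.symm V : Set X) := by
    intro V
    ext x
    exact hg x V
  have hfc : Continuous f := by
    rw [continuous_def]
    intro s hs
    rw [show s = ((⟨s, hs⟩ : Opens X) : Set X) from rfl, hfpre]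
    exact (e ⟨s, hs⟩).isOpen
  have hgc : Continuous g := by
    rw [continuous_def]
    intro s hs
    rw [show s = ((⟨s, hs⟩ : Opens Y) : Set Y) from rfl, hgpre]
    exact (e.symm ⟨s, hs⟩).isOpen
  refine ⟨⟨⟨f, g, hgf, hfg⟩, hfc, hgc⟩, ?_, ?_⟩
  · intro U
    rw [← heΨ U]
    exact (hfpre U).symm
  · intro π hπ
    ext y
    refine stmt4_ext (fun U => ?_)
    have h1 : π y ∈ U ↔ y ∈ (Ψ U : Set Y) := by
      rw [hπ U]; rfl
    have h2 : f y ∈ U ↔ y ∈ (Ψ U : Set Y) := by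
      rw [← heΨ U]; exact hf y U
    show π y ∈ U ↔ f y ∈ U
    rw [h1, h2]
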